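/- Let λ : A → ℤ be order preserving with range λ(A) = {t_0 < t_1 < ⋯ < t_r}, and choose a_0, a_1, …, a_r ∈ A with λ(a_j) = t_j. Let I : I_0 ⊊ I_1 ⊊ ⋯ ⊊ I_k = P be a chain of order ideals of P that is compatible with λ, set i_j = i(I, a_j) (necessarily 0 = i_0 < i_1 < ⋯ < i_r = k) and d_j = i_{j+1} − i_j − 1. Then the number of maps φ : P → ℤ with φ ∈ F(I) and φ(a) = λ(a) for all a ∈ A equals the product over j = 0, 1, …, r−1 of the binomial coefficients C(λ(a_{j+1}) − λ(a_j) + d_j, d_j). -/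

import Mathlib

lemma sm_le_apply {d M : ℕ} (f : Fin d → Fin M) (hf : StrictMono f) (i : Fin d) :
    (i : ℕ) ≤ (f i : ℕ) := by
  obtain ⟨n, hn⟩ := i
  induction n with
  | zero => exact Nat.zero_le _
  | succ n ih =>
    have hn' : n < d := by omega
    have h1 : (⟨n, hn'⟩ : Fin d) < ⟨n + 1, hn⟩ := by simp [Fin.lt_def]
    have h2 := hf h1
    have h3 := ih hn'
    simp only [Fin.lt_def, Fin.val_mk] at h2 h3 ⊢
    omega

lemma sm_apply_le {d M : ℕ} (f : Fin d → Fin M) (hf : StrictMono f) (i : Fin d) :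
    (f i : ℕ) ≤ M - d + (i : ℕ) := by
  have hrev : StrictMono (fun j : Fin d => (f j.rev).rev) := by
    intro x y hxy
    have h1 : y.rev < x.rev := by
      simp only [Fin.lt_def, Fin.val_rev]
      have := x.isLt; have := y.isLt
      simp only [Fin.lt_def] at hxy
      omega
    have h2 := hf h1
    simp only [Fin.lt_def, Fin.val_rev] at h2 ⊢
    have := (f y.rev).isLt; have := (f x.rev).isLt
    omega
  have h4 := sm_le_apply _ hrev i.rev
  simp only [Fin.val_rev, Fin.rev_rev] at h4
  have h2 := (f i).isLt
  have h3 := i.isLt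
  omega

lemma sm_diff {d M : ℕ} (f : Fin d → Fin M) (hf : StrictMono f) :
    ∀ x y : Fin d, x ≤ y → (f x : ℕ) + (y : ℕ) ≤ (f y : ℕ) + (x : ℕ) := by
  intro x y
  obtain ⟨n, hn⟩ := y
  induction n with
  | zero =>
    intro hxy
    have : x = ⟨0, hn⟩ := Fin.ext (by simpa [Fin.le_def] using hxy)
    subst this; omega
  | succ n ih =>
    intro hxy
    by_cases hx : x = ⟨n + 1, hn⟩
    · subst hx; omega
    · have hn' : n < d := by omega
      have hx' : x ≤ ⟨n, hn'⟩ := by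
        simp only [Fin.le_def, Fin.val_mk] at hxy ⊢
        have : (x : ℕ) ≠ n + 1 := fun h => hx (Fin.ext (by simpa using h))
        omega
      have h1 := ih hn' hx'
      have h2 := hf (show (⟨n, hn'⟩ : Fin d) < ⟨n + 1, hn⟩ by simp [Fin.lt_def])
      simp only [Fin.lt_def, Fin.val_mk] at h1 h2 ⊢
      omega

/-- number of strictly monotone maps Fin d → Fin M -/
lemma card_strictMono (d M : ℕ) :
    Nat.card {f : Fin d → Fin M // StrictMono f} = M.choose d := by
  have e : {f : Fin d → Fin M // StrictMono f} ≃ {s : Finset (Fin M) // s.card = d} := by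
    refine
      { toFun := fun f => ⟨Finset.univ.image f.1, by
          rw [Finset.card_image_of_injective _ f.2.injective, Finset.card_univ,
            Fintype.card_fin]⟩
        invFun := fun s => ⟨s.1.orderEmbOfFin s.2, (s.1.orderEmbOfFin s.2).strictMono⟩
        left_inv := fun f => ?_
        right_inv := fun s => ?_ }
    · apply Subtype.ext
      exact (Finset.orderEmbOfFin_unique _ (fun x => Finset.mem_image_of_mem _
        (Finset.mem_univ x)) f.2).symm
    · apply Subtype.ext
      ext x
      simp only [Finset.mem_image, Finset.mem_univ, true_and]
      constructor
      · rintro ⟨i, rfl⟩; exact Finset.orderEmbOfFin_mem _ _ _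
      · intro hx
        have h : x ∈ Set.range (s.1.orderEmbOfFin s.2) := by
          rw [Finset.range_orderEmbOfFin]; exact hx
        obtain ⟨i, hi⟩ := h
        exact ⟨i, hi⟩
  rw [Nat.card_congr e, Nat.card_eq_fintype_card, Fintype.card_finset_len,
    Fintype.card_fin]

/-- number of monotone maps Fin d → Fin (M+1) -/
lemma card_monotone_fin (d M : ℕ) :
    Nat.card {g : Fin d → Fin (M + 1) // Monotone g} = (M + d).choose d := by
  have e : {g : Fin d → Fin (M + 1) // Monotone g} ≃ {f : Fin d → Fin (M + d) // StrictMono f} := by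
    refine
      { toFun := fun g => ⟨fun i => ⟨g.1 i + i, by have := (g.1 i).isLt; have := i.isLt; omega⟩, ?_⟩
        invFun := fun f => ⟨fun i => ⟨f.1 i - i, by
          have := sm_apply_le f.1 f.2 i; have := (f.1 i).isLt; have := i.isLt; omega⟩, ?_⟩
        left_inv := fun g => by
          apply Subtype.ext; funext i; apply Fin.ext
          dsimp only
          omega
        right_inv := fun f => by
          apply Subtype.ext; funext i; apply Fin.ext
          have := sm_le_apply f.1 f.2 i
          dsimp only
          omega }
    · intro x y hxy
      have h := g.2 hxy.le
      simp only [Fin.lt_def, Fin.le_def, Fin.val_mk] at *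
      omega
    · intro x y hxy
      have h1 := f.2.monotone hxy
      have h2 := sm_le_apply f.1 f.2 x
      have h3 := sm_le_apply f.1 f.2 y
      have h4 := sm_diff f.1 f.2 x y hxy
      simp only [Fin.lt_def, Fin.le_def, Fin.val_mk] at *
      omega
  rw [Nat.card_congr e, card_strictMono]

/-- number of bounded monotone integer sequences -/
lemma card_monotone_Icc (d : ℕ) (u v : ℤ) (huv : u ≤ v) :
    Nat.card {g : Fin d → ℤ // Monotone g ∧ ∀ i, u ≤ g i ∧ g i ≤ v}
      = ((v - u).toNat + d).choose d := by
  have e : {g : Fin d → ℤ // Monotone g ∧ ∀ i, u ≤ g i ∧ g i ≤ v}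
      ≃ {g : Fin d → Fin ((v - u).toNat + 1) // Monotone g} := by
    refine
      { toFun := fun g => ⟨fun i => ⟨(g.1 i - u).toNat, by
          have h1 := (g.2.2 i).1; have h2 := (g.2.2 i).2; omega⟩, ?_⟩
        invFun := fun g => ⟨fun i => u + ((g.1 i : ℕ) : ℤ), ?_, fun i => ?_⟩
        left_inv := fun g => by
          apply Subtype.ext; funext i
          have h1 := (g.2.2 i).1
          dsimp only
          omega
        right_inv := fun g => by
          apply Subtype.ext; funext i; apply Fin.ext
          dsimp only
          omega }
    · intro x y hxy
      have h1 := g.2.1 hxy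
      have h2 := (g.2.2 x).1
      simp only [Fin.le_def, Fin.val_mk]
      omega
    · intro x y hxy
      have h := g.2 hxy
      simp only [Fin.le_def] at h
      dsimp only
      omega
    · have h := (g.1 i).isLt
      dsimp only
      omega
  rw [Nat.card_congr e, card_monotone_fin]

open Finset

lemma card_pinned : ∀ (r : ℕ) (p : Fin (r + 1) → ℕ), StrictMono p →
    ∀ (w : Fin (r + 1) → ℤ), Monotone w →
    Nat.card {t : ℕ → ℤ // Monotone t ∧ (∀ i ≤ p 0, t i = w 0) ∧ (∀ j, t (p j) = w j)
        ∧ (∀ i, p (Fin.last r) ≤ i → t i = w (Fin.last r))} =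
      ∏ j : Fin r, ((w j.succ - w j.castSucc).toNat + (p j.succ - p j.castSucc - 1)).choose
        (p j.succ - p j.castSucc - 1) := by
  intro r
  induction r with
  | zero =>
    intro p hp w hw
    rw [Finset.univ_eq_empty, Finset.prod_empty]
    rw [Nat.card_eq_one_iff_unique]
    constructor
    · constructor
      rintro ⟨t, ht, hh, hpin, htl⟩ ⟨t', ht', hh', hpin', htl'⟩
      apply Subtype.ext; funext i
      show t i = t' i
      rcases le_or_gt i (p 0) with h | h
      · rw [hh i h, hh' i h]
      · rw [htl i h.le, htl' i h.le]
    · exact ⟨⟨fun _ => w 0, monotone_const, fun _ _ => rfl, fun j => by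
        rw [Fin.eq_zero j], fun i _ => by rw [show Fin.last 0 = 0 from rfl]⟩⟩
  | succ r ih =>
    intro p hp w hw
    have hP12 : p (Fin.last r).castSucc < p (Fin.last (r + 1)) := hp (Fin.castSucc_lt_last _)
    have hwcl : w (Fin.last r).castSucc ≤ w (Fin.last (r + 1)) := hw (Fin.castSucc_lt_last _).le
    have hp0P1 : p 0 ≤ p (Fin.last r).castSucc := hp.monotone (Fin.zero_le _)
    have hcs0 : ((0 : Fin (r + 1)).castSucc) = (0 : Fin (r + 2)) := rfl
    set P1 := p (Fin.last r).castSucc with hP1def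
    set P2 := p (Fin.last (r + 1)) with hP2def
    set wc := w (Fin.last r).castSucc with hwcdef
    set wl := w (Fin.last (r + 1)) with hwldef
    set D := P2 - P1 - 1 with hDdef
    have key : {t : ℕ → ℤ // Monotone t ∧ (∀ i ≤ p 0, t i = w 0) ∧ (∀ j, t (p j) = w j)
        ∧ (∀ i, P2 ≤ i → t i = wl)} ≃
        {t : ℕ → ℤ // Monotone t ∧ (∀ i ≤ p (0 : Fin (r + 1)).castSucc,
            t i = w (0 : Fin (r + 1)).castSucc) ∧
          (∀ j : Fin (r + 1), t (p j.castSucc) = w j.castSucc)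
          ∧ (∀ i, P1 ≤ i → t i = wc)} ×
        {g : Fin D → ℤ // Monotone g ∧ ∀ i, wc ≤ g i ∧ g i ≤ wl} := by
      refine
        { toFun := fun t => (⟨fun i => min (t.1 i) wc, ?_, ?_, ?_, ?_⟩,
            ⟨fun i => t.1 (P1 + 1 + i), ?_, ?_⟩)
          invFun := fun tg => ⟨fun i => if h1 : i ≤ P1 then tg.1.1 i else
            if h2 : i < P2 then tg.2.1 ⟨i - P1 - 1, by omega⟩ else wl, ?_, ?_, ?_, ?_⟩
          left_inv := ?_
          right_inv := ?_ }
      -- toFun 1: monotone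
      · exact t.2.1.min monotone_const
      -- toFun 1: head
      · intro i hi
        show min (t.1 i) wc = _
        rw [hcs0] at hi ⊢
        rw [t.2.2.1 i hi]
        exact min_eq_left (hw (Fin.zero_le _))
      -- toFun 1: pins
      · intro j
        show min (t.1 (p j.castSucc)) wc = _
        rw [t.2.2.2.1 j.castSucc]
        exact min_eq_left (hw (Fin.castSucc_le_castSucc_iff.mpr (Fin.le_last j)))
      -- toFun 1: tail
      · intro i hi
        show min (t.1 i) wc = wc
        have h1 : t.1 P1 ≤ t.1 i := t.2.1 hi
        have h2 : t.1 P1 = wc := t.2.2.2.1 (Fin.last r).castSucc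
        exact min_eq_right (h2 ▸ h1)
      -- toFun 2: monotone
      · intro x y hxy
        exact t.2.1 (by simp only [Fin.le_def] at hxy; omega)
      -- toFun 2: bounds
      · intro i
        have hi := i.isLt
        have h1 : t.1 P1 ≤ t.1 (P1 + 1 + i) := t.2.1 (by omega)
        have h2 : t.1 (P1 + 1 + i) ≤ t.1 P2 := t.2.1 (by omega)
        have e1 : t.1 P1 = wc := t.2.2.2.1 (Fin.last r).castSucc
        have e2 : t.1 P2 = wl := t.2.2.2.1 (Fin.last (r + 1))
        exact ⟨le_trans (le_of_eq e1.symm) h1, le_trans h2 (le_of_eq e2)⟩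
      -- invFun: monotone
      · obtain ⟨⟨t', ht', hh', hpin', htl'⟩, ⟨g, hg, hgb⟩⟩ := tg
        have ht'P1 : t' P1 = wc := htl' P1 le_rfl
        intro i j hij
        dsimp only
        split_ifs with h1 h2 h3 h4 h5 h6 h7
        · exact ht' hij
        · calc t' i ≤ t' P1 := ht' h1
            _ = wc := ht'P1
            _ ≤ g _ := (hgb _).1
        · calc t' i ≤ t' P1 := ht' h1
            _ = wc := ht'P1
            _ ≤ wl := hwcl
        · omega
        · exact hg (by simp only [Fin.mk_le_mk]; omega)
        · exact (hgb _).2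
        · omega
        · omega
        · exact le_refl _
      -- invFun: head
      · obtain ⟨⟨t', ht', hh', hpin', htl'⟩, ⟨g, hg, hgb⟩⟩ := tg
        intro i hi
        dsimp only
        rw [dif_pos (le_trans hi hp0P1)]
        rw [hh' i (by rw [hcs0]; exact hi)]
        rw [hcs0]
      -- invFun: pins
      · obtain ⟨⟨t', ht', hh', hpin', htl'⟩, ⟨g, hg, hgb⟩⟩ := tg
        intro j
        dsimp only
        induction j using Fin.lastCases with
        | last =>
          rw [dif_neg (by omega), dif_neg (by omega)]
        | cast j' =>
          have hle : p j'.castSucc ≤ P1 :=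
            hp.monotone (Fin.castSucc_le_castSucc_iff.mpr (Fin.le_last j'))
          rw [dif_pos hle]
          exact hpin' j'
      -- invFun: tail
      · obtain ⟨⟨t', ht', hh', hpin', htl'⟩, ⟨g, hg, hgb⟩⟩ := tg
        intro i hi
        dsimp only
        rw [dif_neg (by omega), dif_neg (by omega)]
      -- left_inv
      · rintro ⟨t, ht, hh, hpin, htl⟩
        apply Subtype.ext; funext i
        dsimp only
        have htP1 : t P1 = wc := hpin (Fin.last r).castSucc
        split_ifs with h1 h2
        · exact min_eq_left (htP1 ▸ ht h1)
        · congr 1; omega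
        · exact (htl i (by omega)).symm
      -- right_inv
      · rintro ⟨⟨t', ht', hh', hpin', htl'⟩, ⟨g, hg, hgb⟩⟩
        have ht'P1 : t' P1 = wc := htl' P1 le_rfl
        apply Prod.ext
        · apply Subtype.ext; funext i
          dsimp only
          split_ifs with h1 h2
          · exact min_eq_left (ht'P1 ▸ ht' h1)
          · rw [min_eq_right (hgb _).1]
            exact (htl' i (by omega)).symm
          · rw [min_eq_right hwcl]
            exact (htl' i (by omega)).symm
        · apply Subtype.ext; funext i
          have hi := i.isLt
          dsimp only
          rw [dif_neg (by omega), dif_pos (by omega)]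
          congr 1
          apply Fin.ext
          simp only [Fin.val_mk]
          omega
    rw [Nat.card_congr key, Nat.card_prod, card_monotone_Icc D wc wl hwcl]
    simp only [hP1def, hP2def, hwcdef, hwldef, hDdef]
    rw [Fin.prod_univ_castSucc,
      ih (fun j => p j.castSucc) (fun x y hxy => hp (Fin.castSucc_lt_castSucc_iff.mpr hxy))
        (fun j => w j.castSucc) (fun x y hxy => hw (Fin.castSucc_le_castSucc_iff.mpr hxy))]
    congr 1

/-- A chain of order ideals `I_0 ⊊ I_1 ⊊ ⋯ ⊊ I_k = Q` of a poset `Q`. -/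
structure IdealChain (Q : Type*) [Preorder Q] (k : ℕ) where
  I : Fin (k + 1) → Set Q
  lower : ∀ j, IsLowerSet (I j)
  strict : StrictMono I
  last : I (Fin.last k) = Set.univ

namespace IdealChain

variable {Q : Type*} [Preorder Q] {k : ℕ}

/-- The difference `I_j ∖ I_{j-1}` (with `I_{-1} = ∅`); note that `q ∈ diff c j`
iff `j` is the smallest index with `q ∈ I_j`, i.e. `j = i(I,q)`. -/
def diff (c : IdealChain Q k) (j : Fin (k + 1)) : Set Q :=
  c.I j \ ⋃ j' < j, c.I j'

/-- The cell `F(I) ⊆ ℝ^Q`: maps constant on each difference `I_j ∖ I_{j-1}`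
with weakly increasing constant values. -/
def cell (c : IdealChain Q k) : Set (Q → ℝ) :=
  {φ | ∃ t : Fin (k + 1) → ℝ, Monotone t ∧ ∀ j, ∀ q ∈ c.diff j, φ q = t j}

end IdealChain

/-- A chain of order ideals of `P` is compatible with `λ : A → ℤ` if
`i(I,a) < i(I,b) ↔ λ(a) < λ(b)` for all `a, b ∈ A`. -/
def IdealChain.CompatibleZ {P : Type*} [Preorder P] {k : ℕ} (c : IdealChain P k)
    (A : Set P) (lam : P → ℤ) : Prop :=
  ∀ a ∈ A, ∀ b ∈ A, ∀ ja jb : Fin (k + 1), a ∈ c.diff ja → b ∈ c.diff jb →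
    (ja < jb ↔ lam a < lam b)

/-- the number of integral points of the cell of a compatible chain of
order ideals extending `λ` is a product of binomial coefficients. -/
theorem stmt2 (P : Type*) [Fintype P] [PartialOrder P] (A : Set P)
    (hmin : ∀ p : P, IsMin p → p ∈ A) (hmax : ∀ p : P, IsMax p → p ∈ A)
    (lam : P → ℤ) (hlam : ∀ a ∈ A, ∀ b ∈ A, a ≤ b → lam a ≤ lam b)
    -- the range of `λ` is `{t_0 < t_1 < ⋯ < t_r}`, attained at `a_0, …, a_r ∈ A`
    (r : ℕ) (a : Fin (r + 1) → P) (ha : ∀ j, a j ∈ A)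
    (hstrict : StrictMono fun j => lam (a j))
    (hrange : ∀ b ∈ A, ∃ j, lam b = lam (a j))
    -- a chain of order ideals of `P` compatible with `λ`
    (k : ℕ) (c : IdealChain P k) (hcompat : c.CompatibleZ A lam)
    -- `ix j = i(I, a_j)`
    (ix : Fin (r + 1) → Fin (k + 1)) (hix : ∀ j, a j ∈ c.diff (ix j)) :
    Nat.card {φ : P → ℤ | (fun p => (φ p : ℝ)) ∈ c.cell ∧ ∀ b ∈ A, φ b = lam b} =
      ∏ j : Fin r,
        Nat.choose
          ((lam (a j.succ) - lam (a j.castSucc)).toNat +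
            ((ix j.succ : ℕ) - (ix j.castSucc : ℕ) - 1))
          ((ix j.succ : ℕ) - (ix j.castSucc : ℕ) - 1) := by
  classical
  -- basic facts about the chain
  have hImono : Monotone c.I := c.strict.monotone
  have hmem_diff : ∀ (q : P) (j), q ∈ c.diff j ↔ q ∈ c.I j ∧ ∀ j' < j, q ∉ c.I j' := by
    intro q j
    simp only [IdealChain.diff, Set.mem_diff, Set.mem_iUnion, not_exists]
  have hexI : ∀ q : P, (Finset.univ.filter (fun j => q ∈ c.I j)).Nonempty := by
    intro q
    exact ⟨Fin.last k, by simp [c.last]⟩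
  set idx : P → Fin (k + 1) := fun q => (Finset.univ.filter (fun j => q ∈ c.I j)).min' (hexI q)
    with hidxdef
  have hidx_mem : ∀ q, q ∈ c.I (idx q) := by
    intro q
    have := Finset.min'_mem _ (hexI q)
    simpa using this
  have hidx_min : ∀ q j, q ∈ c.I j → idx q ≤ j := by
    intro q j hj
    exact Finset.min'_le _ _ (by simpa using hj)
  have hidx_diff : ∀ q, q ∈ c.diff (idx q) := by
    intro q
    rw [hmem_diff]
    refine ⟨hidx_mem q, fun j' hj' hq => ?_⟩
    exact absurd (hidx_min q j' hq) (not_le.mpr hj')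
  have hdiff_idx : ∀ q j, q ∈ c.diff j → idx q = j := by
    intro q j hq
    rw [hmem_diff] at hq
    refine le_antisymm (hidx_min q j hq.1) ?_
    by_contra h
    exact hq.2 (idx q) (not_le.1 h) (hidx_mem q)
  have hidx_mono : Monotone idx := by
    intro x y hxy
    exact hidx_min x _ (c.lower (idx y) hxy (hidx_mem y))
  have hdiff_ne : ∀ j : Fin (k + 1), 0 < (j : ℕ) → (c.diff j).Nonempty := by
    intro j hj
    have hm : (j : ℕ) - 1 < k + 1 := by omega
    have hlt : (⟨(j : ℕ) - 1, hm⟩ : Fin (k + 1)) < j := by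
      simp only [Fin.lt_def, Fin.val_mk]
      omega
    obtain ⟨q, hq1, hq2⟩ := Set.exists_of_ssubset (c.strict hlt)
    refine ⟨q, (hmem_diff q j).2 ⟨hq1, fun j' hj' hq' => ?_⟩⟩
    have : j' ≤ (⟨(j : ℕ) - 1, hm⟩ : Fin (k + 1)) := by
      simp only [Fin.le_def, Fin.lt_def] at hj' ⊢
      omega
    exact hq2 (hImono this hq')
  have hidx_a : ∀ j, idx (a j) = ix j := fun j => hdiff_idx _ _ (hix j)
  -- lam (a 0) is minimal, lam (a last) is maximal on A
  have hlam_lb : ∀ b ∈ A, lam (a 0) ≤ lam b := by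
    intro b hb
    obtain ⟨j, hj⟩ := hrange b hb
    rw [hj]
    exact hstrict.monotone (Fin.zero_le j)
  have hlam_ub : ∀ b ∈ A, lam b ≤ lam (a (Fin.last r)) := by
    intro b hb
    obtain ⟨j, hj⟩ := hrange b hb
    rw [hj]
    exact hstrict.monotone (Fin.le_last j)
  -- all indices are ≥ ix 0
  have hix0_le : ∀ q : P, ix 0 ≤ idx q := by
    intro q
    obtain ⟨m, hmq, hmm⟩ := Finite.exists_le_minimal (p := fun _ : P => True) (trivial : True)
    have hmA : m ∈ A := hmin m (fun y hy => hmm.2 trivial hy)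
    have h1 : idx m ≤ idx q := hidx_mono hmq
    have h2 : ¬ (idx m < ix 0) := by
      rw [hcompat m hmA (a 0) (ha 0) (idx m) (ix 0) (hidx_diff m) (hix 0)]
      exact not_lt.2 (hlam_lb m hmA)
    exact le_trans (not_lt.1 h2) h1
  -- ix (last r) = last k
  have hixlast : ix (Fin.last r) = Fin.last k := by
    have hexq : ∃ q : P, idx q = Fin.last k := by
      rcases Nat.eq_zero_or_pos k with hk | hk
      · subst hk
        refine ⟨a 0, ?_⟩
        have h1 := (idx (a 0)).isLt
        apply Fin.ext
        simp only [Fin.val_last]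
        omega
      · obtain ⟨q, hq⟩ := hdiff_ne (Fin.last k) (by simp [hk])
        exact ⟨q, hdiff_idx q _ hq⟩
    obtain ⟨q, hq⟩ := hexq
    obtain ⟨m, hmq, hmm⟩ := Finite.exists_le_maximal (p := fun _ : P => True) (trivial : True)
      (a := q)
    have hmA : m ∈ A := hmax m (fun y hy => hmm.2 trivial hy)
    have h1 : idx m = Fin.last k := le_antisymm (Fin.le_last _) (hq ▸ hidx_mono hmq)
    have h2 : ¬ (ix (Fin.last r) < idx m) := by
      rw [hcompat (a (Fin.last r)) (ha _) m hmA _ _ (hix _) (hidx_diff m)]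
      exact not_lt.2 (hlam_ub m hmA)
    exact le_antisymm (Fin.le_last _) (h1 ▸ not_lt.1 h2)
  have hdiffge : ∀ j : Fin (k + 1), ix 0 ≤ j → (c.diff j).Nonempty := by
    intro j hj
    rcases eq_or_lt_of_le hj with h | h
    · exact ⟨a 0, h ▸ hix 0⟩
    · exact hdiff_ne j (by simp only [Fin.lt_def] at h; omega)
  -- the strictly monotone pin positions
  have hixstrict : StrictMono ix := by
    intro i j hij
    rw [hcompat (a i) (ha i) (a j) (ha j) (ix i) (ix j) (hix i) (hix j)]
    exact hstrict hij
  set p : Fin (r + 1) → ℕ := fun j => (ix j : ℕ) with hpdef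
  have hpmono : StrictMono p := fun i j hij => hixstrict hij
  set w : Fin (r + 1) → ℤ := fun j => lam (a j) with hwdef
  have hwmono : Monotone w := hstrict.monotone
  -- the clamp function
  have hix0k : (ix 0 : ℕ) ≤ k := Nat.lt_succ_iff.1 (ix 0).isLt
  set clamp : ℕ → Fin (k + 1) :=
    fun i => ⟨max (ix 0 : ℕ) (min i k), by omega⟩ with hclampdef
  have hclamp_ge : ∀ i, ix 0 ≤ clamp i := by
    intro i
    simp only [hclampdef, Fin.le_def, Fin.val_mk]
    omega
  have hclamp_mono : Monotone clamp := by
    intro i j hij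
    simp only [hclampdef, Fin.le_def, Fin.val_mk]
    omega
  have hclamp_idx : ∀ q : P, clamp ((idx q : ℕ)) = idx q := by
    intro q
    have h1 : (ix 0 : ℕ) ≤ (idx q : ℕ) := hix0_le q
    have h2 := (idx q).isLt
    apply Fin.ext
    simp only [hclampdef, Fin.val_mk]
    omega
  -- the equivalence with pinned monotone sequences
  set T := {t : ℕ → ℤ // Monotone t ∧ (∀ i ≤ p 0, t i = w 0) ∧ (∀ j, t (p j) = w j)
      ∧ (∀ i, p (Fin.last r) ≤ i → t i = w (Fin.last r))} with hTdef
  set S := {φ : P → ℤ | (fun p => (φ p : ℝ)) ∈ c.cell ∧ ∀ b ∈ A, φ b = lam b} with hSdef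
  have FS : ∀ t : T, (fun q => t.1 ((idx q : ℕ))) ∈ S := by
    rintro ⟨t, ht, hth, htp, htt⟩
    constructor
    · refine ⟨fun j => ((t (j : ℕ) : ℤ) : ℝ), ?_, ?_⟩
      · intro x y hxy
        have h1 : t (x : ℕ) ≤ t (y : ℕ) := ht (Fin.le_def.1 hxy)
        show ((t (x : ℕ) : ℤ) : ℝ) ≤ ((t (y : ℕ) : ℤ) : ℝ)
        exact_mod_cast h1
      · intro j q hq
        show ((t ((idx q : ℕ)) : ℤ) : ℝ) = ((t ((j : ℕ)) : ℤ) : ℝ)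
        rw [hdiff_idx q j hq]
    · intro b hb
      obtain ⟨j, hj⟩ := hrange b hb
      have hidxb : idx b = ix j := by
        have h1 := hcompat b hb (a j) (ha j) (idx b) (ix j) (hidx_diff b) (hix j)
        have h2 := hcompat (a j) (ha j) b hb (ix j) (idx b) (hix j) (hidx_diff b)
        refine le_antisymm (not_lt.1 ?_) (not_lt.1 ?_)
        · rw [h2]; omega
        · rw [h1]; omega
      show t ((idx b : ℕ)) = lam b
      rw [hidxb, htp j, hwdef, hj]
  set F : T → S := fun t => ⟨fun q => t.1 ((idx q : ℕ)), FS t⟩ with hFdef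
  have hFbij : Function.Bijective F := by
    constructor
    · rintro ⟨t, ht, hth, htp, htt⟩ ⟨t', ht', hth', htp', htt'⟩ heq
      have heq' : ∀ q : P, t ((idx q : ℕ)) = t' ((idx q : ℕ)) :=
        fun q => congrFun (congrArg Subtype.val heq) q
      apply Subtype.ext; funext i
      show t i = t' i
      rcases le_or_gt i (p 0) with h | h
      · rw [hth i h, hth' i h]
      rcases le_or_gt i k with h2 | h2
      · have hj : ix 0 ≤ (⟨i, by omega⟩ : Fin (k + 1)) := by
          simp only [Fin.le_def, Fin.val_mk]
          simp only [hpdef] at h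
          omega
        obtain ⟨q, hq⟩ := hdiffge _ hj
        have := heq' q
        rw [hdiff_idx q _ hq] at this
        exact this
      · have hpl : p (Fin.last r) ≤ i := by
          simp only [hpdef, hixlast, Fin.val_last]
          omega
        rw [htt i hpl, htt' i hpl]
    · rintro ⟨φ, ⟨⟨s, hsmono, hseq⟩, hφA⟩⟩
      -- φ is constant on diffs, and increasing across diffs
      have hconst : ∀ (j : Fin (k + 1)) (q q' : P), q ∈ c.diff j → q' ∈ c.diff j →
          φ q = φ q' := by
        intro j q q' hq hq'
        have e1 : ((φ q : ℤ) : ℝ) = s j := hseq j q hq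
        have e2 : ((φ q' : ℤ) : ℝ) = s j := hseq j q' hq'
        have : ((φ q : ℤ) : ℝ) = ((φ q' : ℤ) : ℝ) := by rw [e1, e2]
        exact_mod_cast this
      have hmono2 : ∀ (j j' : Fin (k + 1)) (q q' : P), j ≤ j' → q ∈ c.diff j →
          q' ∈ c.diff j' → φ q ≤ φ q' := by
        intro j j' q q' hjj hq hq'
        have e1 : ((φ q : ℤ) : ℝ) = s j := hseq j q hq
        have e2 : ((φ q' : ℤ) : ℝ) = s j' := hseq j' q' hq'
        have : ((φ q : ℤ) : ℝ) ≤ ((φ q' : ℤ) : ℝ) := by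
          rw [e1, e2]
          exact hsmono hjj
        exact_mod_cast this
      set t : ℕ → ℤ := fun i => φ (hdiffge (clamp i) (hclamp_ge i)).choose with htdef
      have htc : ∀ i, (hdiffge (clamp i) (hclamp_ge i)).choose ∈ c.diff (clamp i) :=
        fun i => (hdiffge (clamp i) (hclamp_ge i)).choose_spec
      have htval : ∀ (i : ℕ) (j : Fin (k + 1)) (q : P), clamp i = j → q ∈ c.diff j →
          t i = φ q := by
        intro i j q hc hq
        exact hconst j _ q (hc ▸ htc i) hq
      have htmono : Monotone t := by
        intro i i' hii
        exact hmono2 _ _ _ _ (hclamp_mono hii) (htc i) (htc i')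
      have hclamp_pin : ∀ j, clamp (p j) = ix j := by
        intro j
        have h1 : (ix 0 : ℕ) ≤ (ix j : ℕ) := hixstrict.monotone (Fin.zero_le j)
        have h2 := (ix j).isLt
        apply Fin.ext
        simp only [hclampdef, hpdef, Fin.val_mk]
        omega
      have hth : ∀ i ≤ p 0, t i = w 0 := by
        intro i hi
        have hc : clamp i = ix 0 := by
          apply Fin.ext
          simp only [hclampdef, Fin.val_mk]
          simp only [hpdef] at hi
          omega
        rw [htval i (ix 0) (a 0) hc (hix 0), hφA (a 0) (ha 0)]
      have htp : ∀ j, t (p j) = w j := by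
        intro j
        rw [htval (p j) (ix j) (a j) (hclamp_pin j) (hix j), hφA (a j) (ha j)]
      have htt : ∀ i, p (Fin.last r) ≤ i → t i = w (Fin.last r) := by
        intro i hi
        have hc : clamp i = ix (Fin.last r) := by
          apply Fin.ext
          simp only [hclampdef, Fin.val_mk, hixlast, Fin.val_last]
          simp only [hpdef, hixlast, Fin.val_last] at hi
          omega
        rw [htval i _ (a (Fin.last r)) hc (hix _), hφA _ (ha _)]
      refine ⟨⟨t, htmono, hth, htp, htt⟩, ?_⟩
      apply Subtype.ext; funext q
      show t ((idx q : ℕ)) = φ q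
      exact htval _ (idx q) q (hclamp_idx q) (hidx_diff q)
  rw [show Nat.card S = Nat.card T from Nat.card_congr (Equiv.ofBijective F hFbij).symm]
  rw [hTdef]
  exact card_pinned r p hpmono w hwmono
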